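/- arXiv:2205.02174 — 2 statements merged into one kernel-verified Lean document; each statement's English description precedes it below -/
import Mathlib

section
/- The following are equivalent: (1) C is mp; (2) for all compact a,b ∈ C, [a,b] ≤ ρ(⊥) implies (a → ρ(⊥)) ⊔ (b → ρ(⊥)) = ⊤; (3) for all compact a,b ∈ C, (a → ρ(⊥)) ⊔ (b → ρ(⊥)) = [a,b] → ρ(⊥); (4) for every compact a ∈ C, the element a → ρ(⊥) is w-pure. -/
open CompleteLattice

/-- A complete lattice equipped with a commutator operation, axiomatizing the congruence
lattice of an algebra in a semidegenerate congruence-modular variety whose compact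
congruences are closed under the commutator. -/
class CommutatorLattice (C : Type*) [CompleteLattice C] where
  comm : C → C → C
  comm_comm : ∀ a b : C, comm a b = comm b a
  comm_sSup : ∀ (s : Set C) (b : C), comm (sSup s) b = ⨆ a ∈ s, comm a b
  comm_le_inf : ∀ a b : C, comm a b ≤ a ⊓ b
  comm_top : ∀ a : C, comm a ⊤ = a
  compactlyGenerated : ∀ x : C,
    ∃ s : Set C, (∀ a ∈ s, IsCompactElement a) ∧ sSup s = x
  top_isCompact : IsCompactElement (⊤ : C)
  comm_isCompact : ∀ a b : C, IsCompactElement a → IsCompactElement b →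
    IsCompactElement (comm a b)

namespace CommutatorLattice

variable {C : Type*} [CompleteLattice C] [CommutatorLattice C]

/-- The residuation `a → b := ⨆ {c | [a,c] ≤ b}`. -/
def resid (a b : C) : C := sSup {c : C | comm a c ≤ b}

/-- The annihilator `a⊥ := a → ⊥`. -/
def ann (a : C) : C := resid a ⊥

/-- Iterated commutator: `cpow a n = [a,a]^n`, with the convention `[a,a]^0 = a`.
Note that `[a,b]^n` for `n ≥ 1` equals `cpow (comm a b) (n-1)`. -/
def cpow (a : C) : ℕ → C
  | 0 => a
  | n + 1 => comm (cpow a n) (cpow a n)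

/-- Prime elements: `p ≠ ⊤` and `[a,b] ≤ p` implies `a ≤ p` or `b ≤ p`. -/
def IsPrime (p : C) : Prop := p ≠ ⊤ ∧ ∀ a b : C, comm a b ≤ p → a ≤ p ∨ b ≤ p

/-- The radical `ρ(a) := ⨅ {p prime | a ≤ p}`. -/
def radical (a : C) : C := sInf {p : C | IsPrime p ∧ a ≤ p}

variable (C) in
/-- `C` is semiprime if `ρ(⊥) = ⊥`. -/
def Semiprime : Prop := radical (⊥ : C) = ⊥

variable (C) in
/-- Condition (⋆): for all compact `a`, `b` and all `n ≥ 1` there is `m ≥ 0` with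
`[[a,a]^m, [b,b]^m] ≤ [a,b]^n`.  Here `cpow (comm a b) n = [a,b]^(n+1)`, so `n : ℕ`
ranges exactly over the exponents `≥ 1` of the paper. -/
def Star : Prop := ∀ a b : C, IsCompactElement a → IsCompactElement b →
  ∀ n : ℕ, ∃ m : ℕ, comm (cpow a m) (cpow b m) ≤ cpow (comm a b) n

/-- Pure elements: `t ⊔ a⊥ = ⊤` for every compact `a ≤ t`. -/
def IsPure (t : C) : Prop := ∀ a : C, IsCompactElement a → a ≤ t → t ⊔ ann a = ⊤

/-- w-pure elements: `t ⊔ (a → ρ(⊥)) = ⊤` for every compact `a ≤ t`. -/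
def IsWPure (t : C) : Prop :=
  ∀ a : C, IsCompactElement a → a ≤ t → t ⊔ resid a (radical ⊥) = ⊤

/-- Complemented elements. -/
def IsComplEl (a : C) : Prop := ∃ b : C, a ⊔ b = ⊤ ∧ a ⊓ b = ⊥

/-- Regular elements: joins of sets of complemented elements. -/
def IsRegular (t : C) : Prop := ∃ S : Set C, (∀ a ∈ S, IsComplEl a) ∧ t = sSup S

/-- Max-regular elements: maximal among regular elements distinct from `⊤`. -/
def IsMaxRegular (t : C) : Prop :=
  IsRegular t ∧ t ≠ ⊤ ∧ ∀ u : C, IsRegular u → u ≠ ⊤ → t ≤ u → u = t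

/-- Maximal elements of `C \ {⊤}`. -/
def IsMaximal (p : C) : Prop := p ≠ ⊤ ∧ ∀ q : C, q ≠ ⊤ → p ≤ q → q = p

/-- Minimal primes. -/
def IsMinPrime (p : C) : Prop := IsPrime p ∧ ∀ q : C, IsPrime q → q ≤ p → q = p

variable (C) in
/-- `C` is mp if every prime lies above a unique minimal prime. -/
def MP : Prop := ∀ p : C, IsPrime p → ∃! q : C, IsMinPrime q ∧ q ≤ p

variable (C) in
/-- `C` is PF if `a⊥` is pure for every compact `a`. -/
def PF : Prop := ∀ a : C, IsCompactElement a → IsPure (ann a)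

variable (C) in
/-- `C` is PP if `a⊥` is complemented for every compact `a`. -/
def PP : Prop := ∀ a : C, IsCompactElement a → IsComplEl (ann a)

/-- `O(p) := ⨆ {a compact | a⊥ ≰ p}`. -/
def O (p : C) : C := sSup {a : C | IsCompactElement a ∧ ¬ ann a ≤ p}

variable (C) in
/-- `C` is normal. -/
def Normal : Prop := ∀ t u : C, t ⊔ u = ⊤ →
  ∃ a b : C, t ⊔ a = ⊤ ∧ u ⊔ b = ⊤ ∧ comm a b = ⊥

variable (C) in
/-- `C` is B-normal. -/
def BNormal : Prop := ∀ t u : C, t ⊔ u = ⊤ →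
  ∃ a b : C, IsComplEl a ∧ IsComplEl b ∧ t ⊔ a = ⊤ ∧ u ⊔ b = ⊤ ∧ comm a b = ⊥

variable (C) in
/-- `C` is purified. -/
def Purified : Prop := ∀ p q : C, IsMinPrime p → IsMinPrime q → p ≠ q →
  ∃ a : C, IsComplEl a ∧ a ≤ p ∧ ann a ≤ q

variable (C) in
/-- The prime spectrum of `C`. -/
abbrev Spec := {p : C // IsPrime p}

variable (C) in
/-- The Zariski topology on `Spec C`: the closed sets are the `V(t) = {p | t ≤ p}`,
equivalently the topology generated by the sets `D(t) = {p | t ≰ p}`. -/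
def zariskiTop : TopologicalSpace (Spec C) :=
  TopologicalSpace.generateFrom {U : Set (Spec C) | ∃ t : C, U = {p : Spec C | ¬ t ≤ p.1}}

variable (C) in
/-- The flat topology on `Spec C`: generated by the open basis `V(a)`, `a` compact. -/
def flatTop : TopologicalSpace (Spec C) :=
  TopologicalSpace.generateFrom
    {U : Set (Spec C) | ∃ a : C, IsCompactElement a ∧ U = {p : Spec C | a ≤ p.1}}

/-! ### Auxiliary lemmas -/

section Aux

lemma comm_sup_left (a b c : C) : comm (a ⊔ b) c = comm a c ⊔ comm b c := by
  have h := comm_sSup {a, b} c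
  rw [sSup_pair] at h
  rw [h, iSup_insert, iSup_singleton]

lemma comm_mono {a b c d : C} (hab : a ≤ b) (hcd : c ≤ d) : comm a c ≤ comm b d := by
  have h1 : comm a c ≤ comm b c := by
    have h := comm_sup_left a b c
    rw [sup_eq_right.2 hab] at h
    rw [h]; exact le_sup_left
  have h2 : comm b c ≤ comm b d := by
    have h := comm_sup_left c d b
    rw [sup_eq_right.2 hcd] at h
    rw [comm_comm b c, comm_comm b d, h]; exact le_sup_left
  exact h1.trans h2

lemma le_resid_iff {a b c : C} : c ≤ resid a b ↔ comm a c ≤ b := by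
  constructor
  · intro h
    have h2 : comm a (resid a b) ≤ b := by
      rw [comm_comm, resid, comm_sSup]
      exact iSup₂_le fun x hx => by rw [comm_comm]; exact hx
    exact (comm_mono le_rfl h).trans h2
  · intro h
    exact le_sSup h

lemma le_radical (a : C) : a ≤ radical a := le_sInf fun p hp => hp.2

lemma radical_mono {a b : C} (h : a ≤ b) : radical a ≤ radical b :=
  sInf_le_sInf fun p hp => ⟨hp.1, h.trans hp.2⟩

lemma radical_le_of_prime {a p : C} (hp : IsPrime p) (h : a ≤ p) : radical a ≤ p :=
  sInf_le ⟨hp, h⟩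

lemma radical_bot_le_prime {p : C} (hp : IsPrime p) : radical (⊥ : C) ≤ p :=
  radical_le_of_prime hp bot_le

lemma radical_radical_bot_le : radical (radical (⊥ : C)) ≤ radical (⊥ : C) :=
  sInf_le_sInf fun p hp => ⟨hp.1, radical_bot_le_prime hp.1⟩

lemma sq_le_radical_bot {z : C} (h : comm z z ≤ radical ⊥) : z ≤ radical (⊥ : C) :=
  le_sInf fun p hp =>
    (hp.1.2 z z (h.trans (radical_bot_le_prime hp.1))).elim id id

lemma comm_le_radical_bot_iff {x y : C} :
    comm x y ≤ radical (⊥ : C) ↔ x ⊓ y ≤ radical (⊥ : C) := by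
  constructor
  · intro h
    exact sq_le_radical_bot ((comm_mono inf_le_left inf_le_right).trans h)
  · intro h
    exact (comm_le_inf x y).trans h

lemma triple_le_radical_bot {a b c : C} (h : comm (comm a b) c ≤ radical ⊥) :
    a ⊓ b ⊓ c ≤ radical (⊥ : C) := by
  set m := a ⊓ b ⊓ c with hm
  have h1 : comm (comm m m) m ≤ comm (comm a b) c :=
    comm_mono (comm_mono (inf_le_left.trans inf_le_left) (inf_le_left.trans inf_le_right))
      inf_le_right
  have h2 : comm m m ⊓ m ≤ radical ⊥ := comm_le_radical_bot_iff.1 (h1.trans h)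
  have h3 : comm m m ≤ radical (⊥ : C) := by
    have : comm m m ≤ comm m m ⊓ m := le_inf le_rfl ((comm_le_inf m m).trans inf_le_left)
    exact this.trans h2
  exact sq_le_radical_bot h3

lemma prime_resid_or {p : C} (hp : IsPrime p) (a : C) :
    a ≤ p ∨ resid a (radical ⊥) ≤ p :=
  hp.2 a (resid a (radical ⊥)) ((le_resid_iff.1 le_rfl).trans (radical_bot_le_prime hp))

lemma le_of_compact_le {x y : C} (h : ∀ c : C, IsCompactElement c → c ≤ x → c ≤ y) :
    x ≤ y := by
  obtain ⟨s, hs, hsx⟩ := compactlyGenerated x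
  rw [← hsx]
  exact sSup_le fun c hc => h c (hs c hc) (hsx ▸ le_sSup hc)

lemma exists_compact_not_le {x y : C} (h : ¬ x ≤ y) :
    ∃ c : C, IsCompactElement c ∧ c ≤ x ∧ ¬ c ≤ y := by
  by_contra hcon
  push_neg at hcon
  exact h (le_of_compact_le hcon)

lemma exists_prime_ge {x : C} (h : x ≠ (⊤ : C)) : ∃ p : C, IsPrime p ∧ x ≤ p := by
  have hchainCond : ∀ c ⊆ {y : C | y ≠ ⊤}, IsChain (· ≤ ·) c → ∀ y ∈ c,
      ∃ ub ∈ {y : C | y ≠ ⊤}, ∀ z ∈ c, z ≤ ub := by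
    intro c hcs hchain y hy
    refine ⟨sSup c, ?_, fun z hz => le_sSup hz⟩
    intro htop
    obtain ⟨z, hz, hle⟩ := (isCompactElement_iff_le_of_directed_sSup_le C ⊤).1
      top_isCompact c ⟨y, hy⟩ hchain.directedOn (htop ▸ le_rfl)
    exact hcs hz (top_le_iff.1 hle)
  obtain ⟨m, hxm, hm⟩ := zorn_le_nonempty₀ {y : C | y ≠ ⊤} hchainCond x h
  refine ⟨m, ⟨hm.1, ?_⟩, hxm⟩
  intro u v huv
  by_contra hcon
  push_neg at hcon
  obtain ⟨hu, hv⟩ := hcon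
  have hmu : m ⊔ u = ⊤ := by
    by_contra hne
    exact hu (le_trans le_sup_right (hm.2 hne le_sup_left))
  have hmv : m ⊔ v = ⊤ := by
    by_contra hne
    exact hv (le_trans le_sup_right (hm.2 hne le_sup_left))
  have hexp : comm (m ⊔ u) (m ⊔ v) ≤ m := by
    rw [comm_sup_left, comm_comm m (m ⊔ v), comm_sup_left, comm_comm u (m ⊔ v),
      comm_sup_left]
    refine sup_le (sup_le ?_ ?_) (sup_le ?_ ?_)
    · exact (comm_le_inf m m).trans inf_le_left
    · exact (comm_le_inf v m).trans inf_le_right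
    · exact (comm_le_inf m u).trans inf_le_left
    · exact (by rw [comm_comm]; exact huv)
  rw [hmu, hmv, comm_top] at hexp
  exact hm.1 (top_le_iff.1 hexp)

lemma sInf_prime_of_chain {T : Set C} (hc : IsChain (· ≤ ·) T) (hne : T.Nonempty)
    (hall : ∀ q ∈ T, IsPrime q) : IsPrime (sInf T) := by
  obtain ⟨y, hy⟩ := hne
  constructor
  · intro h
    exact (hall y hy).1 (top_le_iff.1 (h ▸ sInf_le hy))
  · intro u v huv
    by_contra hcon
    push_neg at hcon
    obtain ⟨hu, hv⟩ := hcon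
    have hu' : ∃ q ∈ T, ¬ u ≤ q := by
      by_contra h; push_neg at h; exact hu (le_sInf h)
    have hv' : ∃ q ∈ T, ¬ v ≤ q := by
      by_contra h; push_neg at h; exact hv (le_sInf h)
    obtain ⟨q₁, hq₁, hu₁⟩ := hu'
    obtain ⟨q₂, hq₂, hv₂⟩ := hv'
    rcases hc.total hq₁ hq₂ with h12 | h21
    · rcases (hall q₁ hq₁).2 u v ((sInf_le hq₁) |> (le_trans huv)) with h | h
      · exact hu₁ h
      · exact hv₂ (h.trans h12)
    · rcases (hall q₂ hq₂).2 u v ((sInf_le hq₂) |> (le_trans huv)) with h | h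
      · exact hu₁ (h.trans h21)
      · exact hv₂ h

lemma exists_minPrime_le {p : C} (hp : IsPrime p) : ∃ q : C, IsMinPrime q ∧ q ≤ p := by
  have hchainCond : ∀ c ⊆ {q : Cᵒᵈ | IsPrime (OrderDual.ofDual q) ∧ OrderDual.ofDual q ≤ p},
      IsChain (· ≤ ·) c → ∀ y ∈ c,
      ∃ ub ∈ {q : Cᵒᵈ | IsPrime (OrderDual.ofDual q) ∧ OrderDual.ofDual q ≤ p},
        ∀ z ∈ c, z ≤ ub := by
    intro c hcs hchain y hy
    have hT : IsChain (· ≤ ·) (OrderDual.ofDual '' c) := by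
      rintro _ ⟨x, hx, rfl⟩ _ ⟨z, hz, rfl⟩ hne
      rcases hchain hx hz (fun h => hne (by rw [h])) with h | h
      · exact Or.inr h
      · exact Or.inl h
    have hprime : IsPrime (sInf (OrderDual.ofDual '' c)) := by
      refine sInf_prime_of_chain hT ⟨OrderDual.ofDual y, Set.mem_image_of_mem _ hy⟩ ?_
      rintro _ ⟨x, hx, rfl⟩
      exact (hcs hx).1
    refine ⟨OrderDual.toDual (sInf (OrderDual.ofDual '' c)), ⟨hprime, ?_⟩, ?_⟩
    · exact (_root_.sInf_le (Set.mem_image_of_mem _ hy)).trans (hcs hy).2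
    · intro z hz
      exact _root_.sInf_le (Set.mem_image_of_mem _ hz)
  obtain ⟨m, hpm, hm⟩ := zorn_le_nonempty₀ (α := Cᵒᵈ)
    {q : Cᵒᵈ | IsPrime (OrderDual.ofDual q) ∧ OrderDual.ofDual q ≤ p} hchainCond
    (OrderDual.toDual p) ⟨hp, le_rfl⟩
  refine ⟨OrderDual.ofDual m, ⟨hm.1.1, ?_⟩, hm.1.2⟩
  intro q' hq' hle
  have hq'p : q' ≤ p := hle.trans hm.1.2
  have := hm.2 (y := OrderDual.toDual q') ⟨hq', hq'p⟩ hle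
  exact le_antisymm hle this

end Aux

/-- Words in `a` and compact elements not below `p`, closed under the commutator. -/
inductive Word (p a : C) : C → Prop
  | base : Word p a a
  | mem : ∀ d : C, IsCompactElement d → ¬ d ≤ p → Word p a d
  | node : ∀ u v : C, Word p a u → Word p a v → Word p a (comm u v)

section LemmaL

lemma word_compact {p a w : C} (ha : IsCompactElement a) (hw : Word p a w) :
    IsCompactElement w := by
  induction hw with
  | base => exact ha
  | mem d hd _ => exact hd
  | node u v _ _ ihu ihv => exact comm_isCompact u v ihu ihv

lemma radical_inf_le_radical_comm (u v : C) :
    radical u ⊓ radical v ≤ radical (comm u v) := by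
  refine le_sInf fun q hq => ?_
  rcases hq.1.2 u v hq.2 with h | h
  · exact inf_le_left.trans (radical_le_of_prime hq.1 h)
  · exact inf_le_right.trans (radical_le_of_prime hq.1 h)

lemma word_inv {p a w : C} (hp : IsPrime p) (hw : Word p a w) :
    ∃ D : C, IsCompactElement D ∧ ¬ D ≤ p ∧
      (a ⊓ D ≤ radical w ∨ D ≤ radical w) := by
  induction hw with
  | base =>
    refine ⟨⊤, top_isCompact, fun h => hp.1 (top_le_iff.1 h), Or.inl ?_⟩
    exact inf_le_left.trans (le_radical a)
  | mem d hd hdp => exact ⟨d, hd, hdp, Or.inr (le_radical d)⟩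
  | node u v hu hv ihu ihv =>
    obtain ⟨Du, hDu, hDup, hcu⟩ := ihu
    obtain ⟨Dv, hDv, hDvp, hcv⟩ := ihv
    refine ⟨comm Du Dv, comm_isCompact Du Dv hDu hDv, ?_, ?_⟩
    · intro h
      rcases hp.2 Du Dv h with h' | h'
      · exact hDup h'
      · exact hDvp h'
    · have hDle : comm Du Dv ≤ Du ⊓ Dv := comm_le_inf Du Dv
      have key := radical_inf_le_radical_comm u v
      rcases hcu with hu' | hu' <;> rcases hcv with hv' | hv'
      · refine Or.inl (le_trans (le_inf ?_ ?_) key)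
        · exact le_trans (inf_le_inf_left a (hDle.trans inf_le_left)) hu'
        · exact le_trans (inf_le_inf_left a (hDle.trans inf_le_right)) hv'
      · refine Or.inl (le_trans (le_inf ?_ ?_) key)
        · exact le_trans (inf_le_inf_left a (hDle.trans inf_le_left)) hu'
        · exact le_trans (inf_le_right.trans (hDle.trans inf_le_right)) hv'
      · refine Or.inl (le_trans (le_inf ?_ ?_) key)
        · exact le_trans (inf_le_right.trans (hDle.trans inf_le_left)) hu'
        · exact le_trans (inf_le_inf_left a (hDle.trans inf_le_right)) hv'
      · refine Or.inr (le_trans (le_inf ?_ ?_) key)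
        · exact le_trans (hDle.trans inf_le_left) hu'
        · exact le_trans (hDle.trans inf_le_right) hv'

lemma word_not_le_radical_bot {p a w : C} (hp : IsPrime p)
    (hra : resid a (radical ⊥) ≤ p) (hw : Word p a w) : ¬ w ≤ radical (⊥ : C) := by
  intro hle
  obtain ⟨D, hD, hDp, hcase⟩ := word_inv hp hw
  have hrad : radical w ≤ radical (⊥ : C) := (radical_mono hle).trans radical_radical_bot_le
  rcases hcase with h | h
  · have h1 : comm a D ≤ radical (⊥ : C) := (comm_le_inf a D).trans (h.trans hrad)
    exact hDp ((le_resid_iff.2 h1).trans hra)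
  · exact hDp ((h.trans hrad).trans (radical_bot_le_prime hp))

lemma lemmaL {p a : C} (hp : IsPrime p) (ha : IsCompactElement a)
    (hra : resid a (radical ⊥) ≤ p) : ∃ q : C, IsPrime q ∧ q ≤ p ∧ ¬ a ≤ q := by
  have hchainCond : ∀ c ⊆ {x : C | ∀ w : C, Word p a w → ¬ w ≤ x}, IsChain (· ≤ ·) c →
      ∀ y ∈ c, ∃ ub ∈ {x : C | ∀ w : C, Word p a w → ¬ w ≤ x}, ∀ z ∈ c, z ≤ ub := by
    intro c hcs hchain y hy
    refine ⟨sSup c, ?_, fun z hz => le_sSup hz⟩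
    intro w hw hle
    obtain ⟨z, hz, hle'⟩ := (isCompactElement_iff_le_of_directed_sSup_le C w).1
      (word_compact ha hw) c ⟨y, hy⟩ hchain.directedOn hle
    exact hcs hz w hw hle'
  obtain ⟨q, hρq, hq⟩ := zorn_le_nonempty₀ {x : C | ∀ w : C, Word p a w → ¬ w ≤ x} hchainCond
    (radical ⊥) (fun w hw => word_not_le_radical_bot hp hra hw)
  have haq : ¬ a ≤ q := hq.1 a Word.base
  have hqp : q ≤ p := by
    refine le_of_compact_le fun k hk hkq => ?_
    by_contra hkp
    exact hq.1 k (Word.mem k hk hkp) hkq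
  refine ⟨q, ⟨fun h => haq (h ▸ le_top), ?_⟩, hqp, haq⟩
  intro u v huv
  by_contra hcon
  push_neg at hcon
  obtain ⟨hu, hv⟩ := hcon
  have hqu : ∃ w₁ : C, Word p a w₁ ∧ w₁ ≤ q ⊔ u := by
    by_contra h
    push_neg at h
    exact hu (le_trans le_sup_right (hq.2 (fun w hw => h w hw) le_sup_left))
  have hqv : ∃ w₂ : C, Word p a w₂ ∧ w₂ ≤ q ⊔ v := by
    by_contra h
    push_neg at h
    exact hv (le_trans le_sup_right (hq.2 (fun w hw => h w hw) le_sup_left))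
  obtain ⟨w₁, hw₁, hw₁le⟩ := hqu
  obtain ⟨w₂, hw₂, hw₂le⟩ := hqv
  have hword : Word p a (comm w₁ w₂) := Word.node w₁ w₂ hw₁ hw₂
  have hcompute : comm (q ⊔ u) (q ⊔ v) ≤ q := by
    rw [comm_sup_left, comm_comm q (q ⊔ v), comm_sup_left, comm_comm u (q ⊔ v),
      comm_sup_left]
    refine sup_le (sup_le ?_ ?_) (sup_le ?_ ?_)
    · exact (comm_le_inf q q).trans inf_le_left
    · exact (comm_le_inf v q).trans inf_le_right
    · exact (comm_le_inf q u).trans inf_le_left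
    · exact (by rw [comm_comm]; exact huv)
  exact hq.1 (comm w₁ w₂) hword ((comm_mono hw₁le hw₂le).trans hcompute)

end LemmaL

section Main

/-- Condition (2) of the theorem. -/
private def Cond2 (C : Type*) [CompleteLattice C] [CommutatorLattice C] : Prop :=
  ∀ a b : C, IsCompactElement a → IsCompactElement b →
    comm a b ≤ radical (⊥ : C) →
      resid a (radical ⊥) ⊔ resid b (radical ⊥) = ⊤

lemma mp_to_two (h : MP C) : Cond2 C := by
  intro a b ha hb hab
  by_contra hne
  obtain ⟨p, hp, hple⟩ := exists_prime_ge hne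
  have hrap : resid a (radical ⊥) ≤ p := le_sup_left.trans hple
  have hrbp : resid b (radical ⊥) ≤ p := le_sup_right.trans hple
  obtain ⟨q₁, hq₁, hq₁p, haq₁⟩ := lemmaL hp ha hrap
  obtain ⟨q₂, hq₂, hq₂p, hbq₂⟩ := lemmaL hp hb hrbp
  obtain ⟨q₁', hq₁', hq₁'le⟩ := exists_minPrime_le hq₁
  obtain ⟨q₂', hq₂', hq₂'le⟩ := exists_minPrime_le hq₂
  have haq₁' : ¬ a ≤ q₁' := fun h' => haq₁ (h'.trans hq₁'le)
  have hbq₂' : ¬ b ≤ q₂' := fun h' => hbq₂ (h'.trans hq₂'le)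
  obtain ⟨m, _, hmuniq⟩ := h p hp
  have he₁ : q₁' = m := hmuniq q₁' ⟨hq₁', hq₁'le.trans hq₁p⟩
  have he₂ : q₂' = m := hmuniq q₂' ⟨hq₂', hq₂'le.trans hq₂p⟩
  have heq : q₁' = q₂' := he₁.trans he₂.symm
  rcases hq₁'.1.2 a b (hab.trans (radical_bot_le_prime hq₁'.1)) with h' | h'
  · exact haq₁' h'
  · exact hbq₂' (heq ▸ h')

lemma two_contra (h2 : Cond2 C) {p q₁ q₂ : C} (hp : IsPrime p)
    (hq₁ : IsMinPrime q₁) (hq₂ : IsMinPrime q₂) (h1p : q₁ ≤ p) (h2p : q₂ ≤ p)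
    (hne : ¬ q₁ ≤ q₂) : False := by
  obtain ⟨a, ha, haq₁, haq₂⟩ := exists_compact_not_le hne
  have hra : ¬ resid a (radical ⊥) ≤ q₁ := by
    intro hle
    obtain ⟨q', hq', hq'le, haq'⟩ := lemmaL hq₁.1 ha hle
    exact haq' ((hq₁.2 q' hq' hq'le).symm ▸ haq₁)
  obtain ⟨b, hb, hbra, hbq₁⟩ := exists_compact_not_le hra
  have hab : comm a b ≤ radical (⊥ : C) := le_resid_iff.1 hbra
  have htop := h2 a b ha hb hab
  have h1 : resid a (radical ⊥) ≤ q₂ := (prime_resid_or hq₂.1 a).resolve_left haq₂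
  have h2' : resid b (radical ⊥) ≤ q₁ := (prime_resid_or hq₁.1 b).resolve_left hbq₁
  have hfin : (⊤ : C) ≤ p := htop ▸ sup_le (h1.trans h2p) (h2'.trans h1p)
  exact hp.1 (top_le_iff.1 hfin)

lemma two_to_mp (h2 : Cond2 C) : MP C := by
  intro p hp
  obtain ⟨q, hq, hqp⟩ := exists_minPrime_le hp
  refine ⟨q, ⟨hq, hqp⟩, ?_⟩
  rintro y ⟨hy, hyp⟩
  by_contra hne
  have : ¬ y ≤ q ∨ ¬ q ≤ y := by
    by_contra h
    push_neg at h
    exact hne (le_antisymm h.1 h.2)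
  rcases this with h | h
  · exact two_contra h2 hp hy hq hyp hqp h
  · exact two_contra h2 hp hq hy hqp hyp h

lemma two_to_three (h2 : Cond2 C) (a b : C) (ha : IsCompactElement a)
    (hb : IsCompactElement b) :
    resid a (radical ⊥) ⊔ resid b (radical ⊥) = resid (comm a b) (radical ⊥) := by
  refine le_antisymm (sup_le ?_ ?_) ?_
  · refine le_resid_iff.2 ?_
    have : comm (comm a b) (resid a (radical ⊥)) ≤ comm a (resid a (radical ⊥)) :=
      comm_mono ((comm_le_inf a b).trans inf_le_left) le_rfl
    exact this.trans (le_resid_iff.1 le_rfl)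
  · refine le_resid_iff.2 ?_
    have : comm (comm a b) (resid b (radical ⊥)) ≤ comm b (resid b (radical ⊥)) :=
      comm_mono ((comm_le_inf a b).trans inf_le_right) le_rfl
    exact this.trans (le_resid_iff.1 le_rfl)
  · refine le_of_compact_le fun c hc hcle => ?_
    have h1 : comm (comm a b) c ≤ radical (⊥ : C) := le_resid_iff.1 hcle
    have habc : a ⊓ b ⊓ c ≤ radical (⊥ : C) := triple_le_radical_bot h1
    have h2' : comm (comm a c) b ≤ radical (⊥ : C) := by
      refine le_trans ((comm_le_inf (comm a c) b).trans ?_) habc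
      refine le_inf (le_inf ?_ inf_le_right) ?_
      · exact inf_le_left.trans ((comm_le_inf a c).trans inf_le_left)
      · exact inf_le_left.trans ((comm_le_inf a c).trans inf_le_right)
    have htop := h2 (comm a c) b (comm_isCompact a c ha hc) hb h2'
    have hkey : c = comm c (resid (comm a c) (radical ⊥)) ⊔ comm c (resid b (radical ⊥)) := by
      conv_lhs => rw [← comm_top c, ← htop]
      rw [comm_comm c (resid (comm a c) (radical ⊥) ⊔ resid b (radical ⊥)), comm_sup_left,
        comm_comm (resid (comm a c) (radical ⊥)) c, comm_comm (resid b (radical ⊥)) c]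
    rw [hkey]
    refine sup_le (le_sup_left.trans' ?_) (le_sup_right.trans' ?_)
    · refine le_resid_iff.2 ?_
      have hacr : a ⊓ c ⊓ resid (comm a c) (radical ⊥) ≤ radical (⊥ : C) :=
        triple_le_radical_bot (le_resid_iff.1 le_rfl)
      refine le_trans ((comm_le_inf a _).trans ?_) hacr
      refine le_inf (le_inf inf_le_left ?_) ?_
      · exact inf_le_right.trans ((comm_le_inf c _).trans inf_le_left)
      · exact inf_le_right.trans ((comm_le_inf c _).trans inf_le_right)
    · exact (comm_le_inf c _).trans inf_le_right

lemma three_to_two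
    (h3 : ∀ a b : C, IsCompactElement a → IsCompactElement b →
      resid a (radical ⊥) ⊔ resid b (radical ⊥) = resid (comm a b) (radical ⊥)) :
    Cond2 C := by
  intro a b ha hb hab
  rw [h3 a b ha hb]
  refine le_antisymm le_top (le_resid_iff.2 ?_)
  rw [comm_top]
  exact hab

lemma two_to_four (h2 : Cond2 C) (a : C) (ha : IsCompactElement a) :
    IsWPure (resid a (radical (⊥ : C))) := by
  intro c hc hcle
  exact h2 a c ha hc (le_resid_iff.1 hcle)

lemma four_to_two
    (h4 : ∀ a : C, IsCompactElement a → IsWPure (resid a (radical (⊥ : C)))) :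
    Cond2 C := by
  intro a b ha hb hab
  exact h4 a ha b hb (le_resid_iff.2 hab)

end Main

theorem statement13 :
    (MP C ↔ ∀ a b : C, IsCompactElement a → IsCompactElement b →
      comm a b ≤ radical (⊥ : C) →
        resid a (radical ⊥) ⊔ resid b (radical ⊥) = ⊤) ∧
    (MP C ↔ ∀ a b : C, IsCompactElement a → IsCompactElement b →
      resid a (radical ⊥) ⊔ resid b (radical ⊥) = resid (comm a b) (radical ⊥)) ∧
    (MP C ↔ ∀ a : C, IsCompactElement a → IsWPure (resid a (radical ⊥))) := by
  refine ⟨⟨mp_to_two, two_to_mp⟩,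
    ⟨fun h => two_to_three (mp_to_two h), fun h => two_to_mp (three_to_two h)⟩,
    ⟨fun h => two_to_four (mp_to_two h), fun h => two_to_mp (four_to_two h)⟩⟩

end CommutatorLattice
end

section
/- Assume C is semiprime. The following are equivalent: (1) C is purified; (2) every minimal prime of C is a regular element; (3) Min(C) = Sp(C); (4) C is mp and every pure element of C is regular. -/
open CompleteLattice

namespace CommutatorLattice

variable {C : Type*} [CompleteLattice C] [CommutatorLattice C]

/-! ### Auxiliary lemmas -/

section Basic

lemma comm_le_left (a b : C) : comm a b ≤ a := (comm_le_inf a b).trans inf_le_left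
lemma comm_le_right (a b : C) : comm a b ≤ b := (comm_le_inf a b).trans inf_le_right

lemma comm_sup_right (a b c : C) : comm a (b ⊔ c) = comm a b ⊔ comm a c := by
  rw [comm_comm a (b ⊔ c), comm_sup_left, comm_comm b a, comm_comm c a]

lemma comm_mono_left {a b : C} (c : C) (h : a ≤ b) : comm a c ≤ comm b c := by
  have h2 := comm_sup_left a b c
  rw [sup_eq_right.mpr h] at h2
  rw [h2]; exact le_sup_left

lemma comm_mono_s17 {a b a' b' : C} (h1 : a ≤ a') (h2 : b ≤ b') : comm a b ≤ comm a' b' := by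
  refine (comm_mono_left b h1).trans ?_
  rw [comm_comm a' b, comm_comm a' b']
  exact comm_mono_left a' h2

lemma comm_resid_le (a b : C) : comm a (resid a b) ≤ b := by
  unfold resid
  rw [comm_comm, comm_sSup]
  exact iSup₂_le fun c hc => by rw [comm_comm]; exact hc

lemma comm_ann (a : C) : comm a (ann a) = ⊥ := le_bot_iff.mp (comm_resid_le a ⊥)

lemma le_ann_iff {a c : C} : c ≤ ann a ↔ comm a c = ⊥ := by
  constructor
  · intro h
    exact le_bot_iff.mp ((comm_mono_s17 le_rfl h).trans (comm_ann a).le)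
  · intro h
    exact _root_.le_sSup (show comm a c ≤ ⊥ from h.le)

lemma ann_bot : ann (⊥ : C) = ⊤ :=
  eq_top_iff.mpr (le_ann_iff.mpr (comm_top (⊥ : C)))

lemma isComplEl_bot : IsComplEl (⊥ : C) := ⟨⊤, by simp, by simp⟩

lemma ann_eq_of_compl {e b : C} (hsup : e ⊔ b = ⊤) (hinf : e ⊓ b = ⊥) : ann e = b := by
  have hb : b ≤ ann e := le_ann_iff.mpr (le_bot_iff.mp ((comm_le_inf e b).trans hinf.le))
  refine le_antisymm ?_ hb
  calc ann e = comm (ann e) ⊤ := (comm_top _).symm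
    _ = comm (ann e) e ⊔ comm (ann e) b := by rw [← hsup, comm_sup_right]
    _ ≤ ⊥ ⊔ b := sup_le_sup (by rw [comm_comm]; exact (comm_ann e).le) (comm_le_right _ _)
    _ = b := bot_sup_eq b

lemma IsComplEl.sup_ann {e : C} (h : IsComplEl e) : e ⊔ ann e = ⊤ := by
  obtain ⟨b, h1, h2⟩ := h
  rw [ann_eq_of_compl h1 h2]; exact h1

lemma IsComplEl.inf_ann {e : C} (h : IsComplEl e) : e ⊓ ann e = ⊥ := by
  obtain ⟨b, h1, h2⟩ := h
  rw [ann_eq_of_compl h1 h2]; exact h2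

lemma IsComplEl.ann_isComplEl {e : C} (h : IsComplEl e) : IsComplEl (ann e) :=
  ⟨e, by rw [sup_comm]; exact h.sup_ann, by rw [inf_comm]; exact h.inf_ann⟩

lemma le_decomp {e : C} (h : IsComplEl e) (x : C) : x ≤ (x ⊓ e) ⊔ (x ⊓ ann e) := by
  conv_lhs => rw [← comm_top x, ← h.sup_ann, comm_sup_right]
  exact sup_le_sup (comm_le_inf x e) (comm_le_inf x _)

lemma IsPrime.compl_mem {P e : C} (hP : IsPrime P) (he : IsComplEl e) : e ≤ P ∨ ann e ≤ P :=
  hP.2 e (ann e) (by rw [comm_ann]; exact bot_le)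

end Basic

section Cpow

lemma cpow_le_self (a : C) : ∀ n, cpow a n ≤ a
  | 0 => le_rfl
  | n + 1 => (comm_le_left _ _).trans (cpow_le_self a n)

lemma cpow_mono {a b : C} (h : a ≤ b) : ∀ n, cpow a n ≤ cpow b n
  | 0 => h
  | n + 1 => comm_mono_s17 (cpow_mono h n) (cpow_mono h n)

lemma cpow_succ_le (a : C) (n : ℕ) : cpow a (n + 1) ≤ cpow a n := comm_le_left _ _

lemma cpow_le_cpow (a : C) {m n : ℕ} (h : m ≤ n) : cpow a n ≤ cpow a m := by
  induction h with
  | refl => exact le_rfl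
  | step h' ih => exact (cpow_succ_le a _).trans ih
  
lemma cpow_isCompact {a : C} (h : IsCompactElement a) : ∀ n, IsCompactElement (cpow a n)
  | 0 => h
  | n + 1 => comm_isCompact _ _ (cpow_isCompact h n) (cpow_isCompact h n)

lemma cpow_comm_le (x y : C) (j k : ℕ) :
    cpow (x ⊓ y) (max j k + 1) ≤ comm (cpow x j) (cpow y k) := by
  have hx : cpow (x ⊓ y) (max j k) ≤ cpow x j :=
    (cpow_mono inf_le_left _).trans (cpow_le_cpow x (le_max_left j k))
  have hy : cpow (x ⊓ y) (max j k) ≤ cpow y k :=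
    (cpow_mono inf_le_right _).trans (cpow_le_cpow y (le_max_right j k))
  exact comm_mono_s17 hx hy

end Cpow

section Compacts

lemma sSup_compacts_le (x : C) : sSup {c : C | IsCompactElement c ∧ c ≤ x} = x := by
  obtain ⟨s, hs, hx⟩ := compactlyGenerated x
  refine le_antisymm (_root_.sSup_le fun c hc => hc.2) ?_
  conv_lhs => rw [← hx]
  exact _root_.sSup_le_sSup fun a ha => ⟨hs a ha, le_trans (_root_.le_sSup ha) hx.le⟩

lemma isCompact_bot : IsCompactElement (⊥ : C) :=
  (isCompactElement_iff_exists_le_sSup_of_le_sSup C _).mpr fun _ _ => ⟨∅, by simp, by simp⟩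

lemma isCompact_sup {a b : C} (ha : IsCompactElement a) (hb : IsCompactElement b) :
    IsCompactElement (a ⊔ b) := by
  classical
  rw [isCompactElement_iff_exists_le_sSup_of_le_sSup] at ha hb ⊢
  intro s hs
  obtain ⟨t1, ht1, h1⟩ := ha s (le_sup_left.trans hs)
  obtain ⟨t2, ht2, h2⟩ := hb s (le_sup_right.trans hs)
  refine ⟨t1 ∪ t2, ?_, ?_⟩
  · rw [Finset.coe_union]; exact Set.union_subset ht1 ht2
  · exact sup_le (h1.trans (Finset.sup_mono Finset.subset_union_left))
      (h2.trans (Finset.sup_mono Finset.subset_union_right))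

lemma compact_le_of_directed {a : C} (ha : IsCompactElement a) (D : Set C) (hne : D.Nonempty)
    (hdir : DirectedOn (· ≤ ·) D) (hle : a ≤ sSup D) : ∃ x ∈ D, a ≤ x :=
  ((isCompactElement_iff_le_of_directed_sSup_le (k := a)).mp ha) D hne hdir hle

end Compacts

section Primes

lemma IsMaximal.isPrime {m : C} (h : IsMaximal m) : IsPrime m := by
  refine ⟨h.1, fun a b hab => ?_⟩
  by_cases ha : a ≤ m
  · exact Or.inl ha
  · right
    have hsup : m ⊔ a = ⊤ := by
      by_contra hne
      exact ha (le_sup_right.trans_eq (h.2 _ hne le_sup_left))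
    calc b = comm b ⊤ := (comm_top b).symm
      _ = comm b m ⊔ comm b a := by rw [← hsup, comm_sup_right]
      _ ≤ m := sup_le (comm_le_right _ _) (by rw [comm_comm]; exact hab)

lemma exists_maximal_ge {x : C} (hx : x ≠ ⊤) : ∃ m : C, IsMaximal m ∧ x ≤ m := by
  have hub : ∀ c ⊆ {y : C | y ≠ ⊤}, IsChain (· ≤ ·) c → ∀ y ∈ c,
      ∃ ub ∈ {y : C | y ≠ ⊤}, ∀ z ∈ c, z ≤ ub := by
    intro c hcs hchain y hy
    refine ⟨sSup c, ?_, fun z hz => _root_.le_sSup hz⟩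
    intro htop
    obtain ⟨z, hzc, hz⟩ := compact_le_of_directed top_isCompact c ⟨y, hy⟩
      hchain.directedOn htop.ge
    exact hcs hzc (top_le_iff.mp hz)
  obtain ⟨m, hxm, hm⟩ := zorn_le_nonempty₀ {y : C | y ≠ ⊤} hub x hx
  exact ⟨m, ⟨hm.prop, fun q hq hle => le_antisymm (hm.2 hq hle) hle⟩, hxm⟩

lemma isPrime_sInf_chain {T : Set C} (hne : T.Nonempty) (hchain : IsChain (· ≤ ·) T)
    (hT : ∀ q ∈ T, IsPrime q) : IsPrime (sInf T) := by
  obtain ⟨y, hy⟩ := hne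
  constructor
  · intro h
    exact (hT y hy).1 (top_le_iff.mp (h ▸ _root_.sInf_le hy))
  · intro a b hab
    by_contra hcon
    push_neg at hcon
    obtain ⟨ha, hb⟩ := hcon
    rw [le_sInf_iff] at ha hb
    push_neg at ha hb
    obtain ⟨r1, hr1, har⟩ := ha
    obtain ⟨r2, hr2, hbr⟩ := hb
    rcases eq_or_ne r1 r2 with rfl | hne'
    · exact ((hT r1 hr1).2 a b (hab.trans (_root_.sInf_le hr1))).elim har hbr
    rcases hchain hr1 hr2 hne' with h12 | h21
    · exact ((hT r1 hr1).2 a b (hab.trans (_root_.sInf_le hr1))).elim har (fun h' => hbr (h'.trans h12))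
    · exact ((hT r2 hr2).2 a b (hab.trans (_root_.sInf_le hr2))).elim (fun h' => har (h'.trans h21)) hbr

lemma exists_prime_avoiding {S : Set C} (hcpt : ∀ s ∈ S, IsCompactElement s)
    (hne : S.Nonempty)
    (hmul : ∀ s ∈ S, ∀ t ∈ S, ∃ u ∈ S, u ≤ comm s t)
    {x0 : C} (hx0 : ∀ s ∈ S, ¬ s ≤ x0) :
    ∃ q : C, IsPrime q ∧ x0 ≤ q ∧ ∀ s ∈ S, ¬ s ≤ q := by
  have hub : ∀ c ⊆ {x : C | ∀ s ∈ S, ¬ s ≤ x}, IsChain (· ≤ ·) c → ∀ y ∈ c,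
      ∃ ub ∈ {x : C | ∀ s ∈ S, ¬ s ≤ x}, ∀ z ∈ c, z ≤ ub := by
    intro c hcs hchain y hy
    refine ⟨sSup c, fun s hsS hle => ?_, fun z hz => _root_.le_sSup hz⟩
    obtain ⟨z, hzc, hz⟩ := compact_le_of_directed (hcpt s hsS) c ⟨y, hy⟩ hchain.directedOn hle
    exact hcs hzc s hsS hz
  obtain ⟨q, hxq, hq⟩ := zorn_le_nonempty₀ {x : C | ∀ s ∈ S, ¬ s ≤ x} hub x0 hx0
  refine ⟨q, ⟨?_, ?_⟩, hxq, hq.prop⟩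
  · obtain ⟨s0, hs0⟩ := hne
    intro h'
    exact hq.prop s0 hs0 (h' ▸ le_top)
  · intro a b hab
    by_contra hcon
    push_neg at hcon
    have key : ∀ x : C, ¬ x ≤ q → ∃ s ∈ S, s ≤ q ⊔ x := by
      intro x hx
      by_contra hmem
      push_neg at hmem
      exact hx (le_sup_right.trans (hq.2 hmem le_sup_left))
    obtain ⟨s, hsS, hs⟩ := key a hcon.1
    obtain ⟨t, htS, ht⟩ := key b hcon.2
    obtain ⟨u, huS, hu⟩ := hmul s hsS t htS
    apply hq.prop u huS
    calc u ≤ comm (q ⊔ a) (q ⊔ b) := hu.trans (comm_mono_s17 hs ht)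
      _ = comm q q ⊔ comm q b ⊔ (comm a q ⊔ comm a b) := by
          rw [comm_sup_left, comm_sup_right, comm_sup_right]
      _ ≤ q := sup_le (sup_le (comm_le_left _ _) (comm_le_left _ _))
          (sup_le (comm_le_right _ _) hab)

lemma exists_cpow_le_of_le_radical {a r : C} (ha : IsCompactElement a) (h : a ≤ radical r) :
    ∃ n, cpow a n ≤ r := by
  by_contra hc
  push_neg at hc
  obtain ⟨q, hq, hrq, hS⟩ := exists_prime_avoiding (S := Set.range (cpow a))
    (by rintro s ⟨n, rfl⟩; exact cpow_isCompact ha n) ⟨a, 0, rfl⟩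
    (by rintro s ⟨j, rfl⟩ t ⟨k, rfl⟩
        refine ⟨cpow a (max j k + 1), ⟨_, rfl⟩, ?_⟩
        have h2 := cpow_comm_le a a j k
        rwa [inf_idem] at h2)
    (by rintro s ⟨n, rfl⟩; exact hc n)
  exact hS a ⟨0, rfl⟩ (h.trans (_root_.sInf_le ⟨hq, hrq⟩))

end Primes

section SemiprimeSec

lemma eq_bot_of_comm_self_eq_bot (hsp : Semiprime C) {x : C} (h : comm x x = ⊥) : x = ⊥ := by
  have hx : x ≤ radical ⊥ :=
    _root_.le_sInf fun p hp => ((hp.1.2 x x (h.le.trans bot_le)).elim id id)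
  exact le_bot_iff.mp (hx.trans hsp.le)

lemma eq_bot_of_cpow_eq_bot (hsp : Semiprime C) : ∀ {n : ℕ} {x : C}, cpow x n = ⊥ → x = ⊥
  | 0, _, h => h
  | n + 1, x, h =>
    eq_bot_of_cpow_eq_bot hsp (n := n) (eq_bot_of_comm_self_eq_bot hsp h)

lemma isComplEl_sup (hsp : Semiprime C) {e f : C} (he : IsComplEl e) (hf : IsComplEl f) :
    IsComplEl (e ⊔ f) := by
  refine ⟨ann e ⊓ ann f, ?_, ?_⟩
  · rw [eq_top_iff]
    calc (⊤ : C) = e ⊔ ann e := he.sup_ann.symm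
      _ ≤ e ⊔ ((ann e ⊓ f) ⊔ (ann e ⊓ ann f)) := sup_le_sup_left (le_decomp hf (ann e)) e
      _ ≤ e ⊔ f ⊔ (ann e ⊓ ann f) := by
          refine sup_le (le_sup_of_le_left le_sup_left) (sup_le ?_ le_sup_right)
          exact le_sup_of_le_left (inf_le_right.trans le_sup_right)
  · apply eq_bot_of_comm_self_eq_bot hsp
    apply le_bot_iff.mp
    calc comm ((e ⊔ f) ⊓ (ann e ⊓ ann f)) ((e ⊔ f) ⊓ (ann e ⊓ ann f))
        ≤ comm (e ⊔ f) (ann e ⊓ ann f) := comm_mono_s17 inf_le_left inf_le_right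
      _ = comm e (ann e ⊓ ann f) ⊔ comm f (ann e ⊓ ann f) := comm_sup_left _ _ _
      _ ≤ (e ⊓ ann e) ⊔ (f ⊓ ann f) := by
          refine sup_le_sup ?_ ?_
          · exact (comm_le_inf _ _).trans (inf_le_inf_left e inf_le_left)
          · exact (comm_le_inf _ _).trans (inf_le_inf_left f inf_le_right)
      _ = ⊥ := by rw [he.inf_ann, hf.inf_ann, sup_idem]

lemma le_of_cpow_le_compl (hsp : Semiprime C) {a e : C} (he : IsComplEl e) {n : ℕ}
    (h : cpow a n ≤ e) : a ≤ e := by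
  have hb : a ⊓ ann e = ⊥ := by
    refine eq_bot_of_cpow_eq_bot hsp (n := n) (le_bot_iff.mp ?_)
    calc cpow (a ⊓ ann e) n ≤ cpow a n ⊓ ann e :=
          le_inf (cpow_mono inf_le_left n) ((cpow_le_self _ n).trans inf_le_right)
      _ ≤ e ⊓ ann e := inf_le_inf_right _ h
      _ = ⊥ := he.inf_ann
  calc a ≤ (a ⊓ e) ⊔ (a ⊓ ann e) := le_decomp he a
    _ = a ⊓ e := by rw [hb, sup_bot_eq]
    _ ≤ e := inf_le_right

lemma isRegular_of_le_radical (hsp : Semiprime C) {t : C}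
    (h : t ≤ radical (sSup {e : C | IsComplEl e ∧ e ≤ t})) : IsRegular t := by
  set B := {e : C | IsComplEl e ∧ e ≤ t} with hB
  have hdir : DirectedOn (· ≤ ·) B := fun x hx y hy =>
    ⟨x ⊔ y, ⟨isComplEl_sup hsp hx.1 hy.1, sup_le hx.2 hy.2⟩, le_sup_left, le_sup_right⟩
  have hne : B.Nonempty := ⟨⊥, isComplEl_bot, bot_le⟩
  refine ⟨B, fun e he => he.1, le_antisymm ?_ (_root_.sSup_le fun e he => he.2)⟩
  rw [← sSup_compacts_le t]
  refine _root_.sSup_le fun a ha => ?_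
  obtain ⟨n, hn⟩ := exists_cpow_le_of_le_radical ha.1 (ha.2.trans h)
  obtain ⟨e, heB, he⟩ := compact_le_of_directed (cpow_isCompact ha.1 n) B hne hdir hn
  exact (le_of_cpow_le_compl hsp heB.1 he).trans (_root_.le_sSup heB)

lemma exists_prime_le_avoiding (hsp : Semiprime C) {m a : C} (hm : IsPrime m)
    (ha : IsCompactElement a) (hann : ann a ≤ m) :
    ∃ q : C, IsPrime q ∧ q ≤ m ∧ ¬ a ≤ q := by
  rcases eq_or_ne a ⊥ with rfl | hab
  · rw [ann_bot] at hann
    exact absurd (top_le_iff.mp hann) hm.1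
  set S : Set C := {x | (∃ c, IsCompactElement c ∧ ¬ c ≤ m ∧ ∃ n, x = cpow (comm c a) n) ∨
    ∃ n, x = cpow a n} with hSdef
  by_cases hbot : ∃ s ∈ S, s = ⊥
  · obtain ⟨s, hsS, rfl⟩ := hbot
    rcases hsS with ⟨c, hc, hcm, n, hcn⟩ | ⟨n, hn⟩
    · exfalso
      apply hcm
      refine (le_ann_iff.mpr ?_).trans hann
      rw [comm_comm]
      exact eq_bot_of_cpow_eq_bot hsp hcn.symm
    · exact absurd (eq_bot_of_cpow_eq_bot hsp hn.symm) hab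
  · push_neg at hbot
    have hcpt : ∀ s ∈ S, IsCompactElement s := by
      rintro s (⟨c, hc, hcm, n, rfl⟩ | ⟨n, rfl⟩)
      · exact cpow_isCompact (comm_isCompact c a hc ha) n
      · exact cpow_isCompact ha n
    have hmul : ∀ s ∈ S, ∀ t ∈ S, ∃ u ∈ S, u ≤ comm s t := by
      rintro s (⟨c, hc, hcm, j, rfl⟩ | ⟨j, rfl⟩) t (⟨d, hd, hdm, k, rfl⟩ | ⟨k, rfl⟩)
      · have hcd : ¬ c ⊓ d ≤ m := by
          intro hle
          rcases hm.2 c d ((comm_le_inf c d).trans hle) with h' | h'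
          · exact hcm h'
          · exact hdm h'
        obtain ⟨e, he, hecd, hem⟩ := exists_compact_not_le hcd
        refine ⟨cpow (comm e a) (max j k + 1), Or.inl ⟨e, he, hem, _, rfl⟩, ?_⟩
        refine le_trans (cpow_mono ?_ _) (cpow_comm_le (comm c a) (comm d a) j k)
        exact le_inf (comm_mono_s17 (hecd.trans inf_le_left) le_rfl)
          (comm_mono_s17 (hecd.trans inf_le_right) le_rfl)
      · refine ⟨cpow (comm c a) (max j k + 1), Or.inl ⟨c, hc, hcm, _, rfl⟩, ?_⟩
        refine le_trans (cpow_mono ?_ _) (cpow_comm_le (comm c a) a j k)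
        exact le_inf le_rfl (comm_le_right c a)
      · refine ⟨cpow (comm d a) (max k j + 1), Or.inl ⟨d, hd, hdm, _, rfl⟩, ?_⟩
        rw [comm_comm (cpow a j) (cpow (comm d a) k)]
        refine le_trans (cpow_mono ?_ _) (cpow_comm_le (comm d a) a k j)
        exact le_inf le_rfl (comm_le_right d a)
      · refine ⟨cpow a (max j k + 1), Or.inr ⟨_, rfl⟩, ?_⟩
        have h2 := cpow_comm_le a a j k
        rwa [inf_idem] at h2
    obtain ⟨q, hq, -, hS⟩ := exists_prime_avoiding (S := S) hcpt ⟨a, Or.inr ⟨0, rfl⟩⟩ hmul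
      (x0 := ⊥) (fun s hs hle => hbot s hs (le_bot_iff.mp hle))
    refine ⟨q, hq, ?_, fun hle => hS a (Or.inr ⟨0, rfl⟩) hle⟩
    rw [← sSup_compacts_le q]
    refine _root_.sSup_le fun e he => ?_
    by_contra hem
    exact hS (comm e a) (Or.inl ⟨e, he.1, hem, 0, rfl⟩) ((comm_le_left e a).trans he.2)

end SemiprimeSec

section MainProps

lemma purified_min_regular (hsp : Semiprime C) (hpur : Purified C) {p : C} (hp : IsMinPrime p) :
    IsRegular p := by
  apply isRegular_of_le_radical hsp
  refine _root_.le_sInf fun P hP => ?_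
  obtain ⟨hPp, hrP⟩ := hP
  obtain ⟨q, hq, hqP⟩ := exists_minPrime_le hPp
  rcases eq_or_ne p q with rfl | hne
  · exact hqP
  · obtain ⟨e, he, hep, hanne⟩ := hpur p q hp hq hne
    exfalso
    apply hPp.1
    rw [eq_top_iff, ← he.sup_ann]
    exact sup_le ((_root_.le_sSup (s := {e : C | IsComplEl e ∧ e ≤ p}) ⟨he, hep⟩).trans hrP) (hanne.trans hqP)

lemma purified_of_min_regular (hreg : ∀ p : C, IsMinPrime p → IsRegular p) : Purified C := by
  intro p q hp hq hne
  have hpq : ¬ p ≤ q := fun hle => hne (hq.2 p hp.1 hle)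
  obtain ⟨S, hS, hps⟩ := hreg p hp
  have hex : ∃ e ∈ S, ¬ e ≤ q := by
    by_contra hcon
    push_neg at hcon
    exact hpq (by rw [hps]; exact _root_.sSup_le hcon)
  obtain ⟨e, heS, heq⟩ := hex
  refine ⟨e, hS e heS, by rw [hps]; exact _root_.le_sSup heS, ?_⟩
  rcases hq.1.compl_mem (hS e heS) with h' | h'
  · exact absurd h' heq
  · exact h'

lemma min_eq_maxregular (hreg : ∀ p : C, IsMinPrime p → IsRegular p) :
    {p : C | IsMinPrime p} = {p : C | IsMaxRegular p} := by
  ext t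
  simp only [Set.mem_setOf_eq]
  constructor
  · intro hp
    refine ⟨hreg t hp, hp.1.1, fun u hu hune htu => ?_⟩
    obtain ⟨S, hS, rfl⟩ := hu
    refine le_antisymm (_root_.sSup_le fun e heS => ?_) htu
    rcases hp.1.compl_mem (hS e heS) with h' | h'
    · exact h'
    · exfalso
      apply hune
      rw [eq_top_iff, ← (hS e heS).sup_ann]
      exact sup_le (_root_.le_sSup heS) (h'.trans htu)
  · intro ht
    obtain ⟨m, hm, htm⟩ := exists_maximal_ge ht.2.1
    have hmp := hm.isPrime
    obtain ⟨q, hq, hqm⟩ := exists_minPrime_le hmp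
    obtain ⟨Sq, hSq, hqs⟩ := hreg q hq
    obtain ⟨St, hSt, hts⟩ := ht.1
    have hregq : IsRegular (t ⊔ q) :=
      ⟨St ∪ Sq, fun e he => he.elim (hSt e) (hSq e), by rw [sSup_union, ← hts, ← hqs]⟩
    have hne : t ⊔ q ≠ ⊤ := fun h' => hm.1 (top_le_iff.mp (h' ▸ sup_le htm hqm))
    have heq : t ⊔ q = t := ht.2.2 _ hregq hne le_sup_left
    have hqt : q ≤ t := le_sup_right.trans heq.le
    have htq : t ≤ q := by
      conv_lhs => rw [hts]
      refine _root_.sSup_le fun e heS => ?_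
      rcases hq.1.compl_mem (hSt e heS) with h' | h'
      · exact h'
      · exfalso
        apply hm.1
        rw [eq_top_iff, ← (hSt e heS).sup_ann]
        refine sup_le ((show e ≤ t by rw [hts]; exact _root_.le_sSup heS).trans htm)
          (h'.trans (hqt.trans htm))
    have : t = q := le_antisymm htq hqt
    rw [this]; exact hq

lemma purified_mp (hpur : Purified C) : MP C := by
  intro P hP
  obtain ⟨q, hq, hqP⟩ := exists_minPrime_le hP
  refine ⟨q, ⟨hq, hqP⟩, ?_⟩
  rintro q' ⟨hq', hq'P⟩
  by_contra hne
  obtain ⟨e, he, heq', hanne⟩ := hpur q' q hq' hq hne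
  apply hP.1
  rw [eq_top_iff, ← he.sup_ann]
  exact sup_le (heq'.trans hq'P) (hanne.trans hqP)

lemma pure_regular (hsp : Semiprime C) (hreg : ∀ p : C, IsMinPrime p → IsRegular p)
    {t : C} (ht : IsPure t) : IsRegular t := by
  apply isRegular_of_le_radical hsp
  refine _root_.le_sInf ?_
  rintro P ⟨hP, hrP⟩
  obtain ⟨q, hq, hqP⟩ := exists_minPrime_le hP
  by_cases htq : t ≤ q
  · exact htq.trans hqP
  · exfalso
    obtain ⟨a, ha, hat, haq⟩ := exists_compact_not_le htq
    have hann : ann a ≤ q :=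
      (hq.1.2 a (ann a) (by rw [comm_ann]; exact bot_le)).resolve_left haq
    have htop : t ⊔ q = ⊤ :=
      eq_top_iff.mpr (by rw [← ht a ha hat]; exact sup_le_sup_left hann t)
    set D : Set C := {x | ∃ c d : C, c ≤ t ∧ IsCompactElement d ∧ d ≤ q ∧ x = c ⊔ d} with hD
    have hdirD : DirectedOn (· ≤ ·) D := by
      rintro x ⟨c1, d1, hc1, hd1, hdq1, rfl⟩ y ⟨c2, d2, hc2, hd2, hdq2, rfl⟩
      refine ⟨(c1 ⊔ c2) ⊔ (d1 ⊔ d2),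
        ⟨c1 ⊔ c2, d1 ⊔ d2, sup_le hc1 hc2, isCompact_sup hd1 hd2, sup_le hdq1 hdq2, rfl⟩, ?_, ?_⟩
      · exact sup_le (le_sup_of_le_left le_sup_left) (le_sup_of_le_right le_sup_left)
      · exact sup_le (le_sup_of_le_left le_sup_right) (le_sup_of_le_right le_sup_right)
    have hDne : D.Nonempty := ⟨t, t, ⊥, le_rfl, isCompact_bot, bot_le, (sup_bot_eq t).symm⟩
    have hsupD : (⊤ : C) ≤ sSup D := by
      rw [← htop]
      refine sup_le (_root_.le_sSup ⟨t, ⊥, le_rfl, isCompact_bot, bot_le, (sup_bot_eq t).symm⟩) ?_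
      rw [← sSup_compacts_le q]
      refine _root_.sSup_le fun d hd => ?_
      exact le_sup_right.trans (_root_.le_sSup ⟨⊥, d, bot_le, hd.1, hd.2, rfl⟩)
    obtain ⟨x, hxD, hx⟩ := compact_le_of_directed top_isCompact D hDne hdirD hsupD
    obtain ⟨c, d, hct, hd, hdq, rfl⟩ := hxD
    obtain ⟨Sq, hSq, hqs⟩ := hreg q hq
    have hq' : q ≤ sSup {f : C | IsComplEl f ∧ f ≤ q} := by
      conv_lhs => rw [hqs]
      exact _root_.sSup_le fun f hf => _root_.le_sSup ⟨hSq f hf, by rw [hqs]; exact _root_.le_sSup hf⟩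
    have hdirq : DirectedOn (· ≤ ·) {f : C | IsComplEl f ∧ f ≤ q} := fun x hx' y hy' =>
      ⟨x ⊔ y, ⟨isComplEl_sup hsp hx'.1 hy'.1, sup_le hx'.2 hy'.2⟩, le_sup_left, le_sup_right⟩
    obtain ⟨f, hf, hdf⟩ := compact_le_of_directed hd {f : C | IsComplEl f ∧ f ≤ q} ⟨⊥, isComplEl_bot, bot_le⟩ hdirq
      (hdq.trans hq')
    have hcf : (⊤ : C) ≤ c ⊔ f := hx.trans (sup_le_sup_left hdf c)
    have hannf : ann f ≤ c := by
      calc ann f = comm (ann f) ⊤ := (comm_top _).symm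
        _ = comm (ann f) c ⊔ comm (ann f) f := by
            rw [← top_le_iff.mp hcf, comm_sup_right]
        _ ≤ c ⊔ ⊥ := sup_le_sup (comm_le_right _ _)
            (by rw [comm_comm]; exact (comm_ann f).le)
        _ = c := sup_bot_eq c
    apply hP.1
    rw [eq_top_iff, ← hf.1.sup_ann]
    refine sup_le (hf.2.trans hqP) ?_
    exact (_root_.le_sSup (s := {e : C | IsComplEl e ∧ e ≤ t}) ⟨hf.1.ann_isComplEl, hannf.trans hct⟩).trans hrP

lemma mp_pure_min_regular (hsp : Semiprime C) (hmp : MP C)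
    (hpr : ∀ t : C, IsPure t → IsRegular t) {p : C} (hp : IsMinPrime p) : IsRegular p := by
  apply hpr
  intro a ha hap
  by_contra hne
  obtain ⟨m, hm, hlem⟩ := exists_maximal_ge hne
  have hmP := hm.isPrime
  obtain ⟨q, hq, hqm, haq⟩ := exists_prime_le_avoiding hsp hmP ha (le_sup_right.trans hlem)
  obtain ⟨q0, hq0, hq0q⟩ := exists_minPrime_le hq
  obtain ⟨z, hz, huniq⟩ := hmp m hmP
  have h1 : q0 = z := huniq q0 ⟨hq0, hq0q.trans hqm⟩
  have h2 : p = z := huniq p ⟨hp, le_sup_left.trans hlem⟩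
  exact haq ((hap.trans (h2.trans h1.symm).le).trans hq0q)

end MainProps


theorem statement17 (h : Semiprime C) :
    (Purified C ↔ ∀ p : C, IsMinPrime p → IsRegular p) ∧
    (Purified C ↔ {p : C | IsMinPrime p} = {p : C | IsMaxRegular p}) ∧
    (Purified C ↔ MP C ∧ ∀ t : C, IsPure t → IsRegular t) := by
  have hA : Purified C → ∀ p : C, IsMinPrime p → IsRegular p :=
    fun hpur p hp => purified_min_regular h hpur hp
  refine ⟨⟨hA, purified_of_min_regular⟩, ⟨?_, ?_⟩, ⟨?_, ?_⟩⟩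
  · intro hpur
    exact min_eq_maxregular (hA hpur)
  · intro he
    refine purified_of_min_regular fun p hp => ?_
    exact ((Set.ext_iff.mp he p).mp hp).1
  · intro hpur
    exact ⟨purified_mp hpur, fun t ht => pure_regular h (hA hpur) ht⟩
  · rintro ⟨hmp, hpr⟩
    exact purified_of_min_regular fun p hp => mp_pure_min_regular h hmp hpr hp


end CommutatorLattice
end
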